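/- For every natural number m and every element x of a field of rational functions (or for all complex q, x avoiding poles), one has 1 = \sum_{k=0}^{m} (1 + x q^k) \binom{m}{k}_q \frac{(x;q)_{m+1}}{(q^k x^2;q)_{m+1}} x^k q^{k^2}, where \binom{m}{k}_q is the Gaussian binomial coefficient and (a;q)_n = \prod_{j=0}^{n-1}(1 - a q^j). -/

import Mathlib

/-- The q-shifted factorial `(a;q)_n = ∏_{j=0}^{n-1} (1 - a q^j)`. -/
noncomputable def qPoch {F : Type*} [Field F] (a q : F) (n : ℕ) : F :=
  ∏ j ∈ Finset.range n, (1 - a * q ^ j)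

/-- The Gaussian binomial coefficient `(q;q)_m / ((q;q)_k (q;q)_{m-k})`. -/
noncomputable def qBinom {F : Type*} [Field F] (q : F) (m k : ℕ) : F :=
  qPoch q q m / (qPoch q q k * qPoch q q (m - k))

lemma qPoch_succ {F : Type*} [Field F] (a q : F) (n : ℕ) :
    qPoch a q (n + 1) = qPoch a q n * (1 - a * q ^ n) :=
  Finset.prod_range_succ _ _

lemma qPoch_succ' {F : Type*} [Field F] (a q : F) (n : ℕ) :
    qPoch a q (n + 1) = qPoch (q * a) q n * (1 - a) := by
  unfold qPoch
  rw [Finset.prod_range_succ']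
  congr 1
  · exact Finset.prod_congr rfl fun j _ => by rw [pow_succ']; ring
  · simp

lemma qPoch_shift {F : Type*} [Field F] (a q : F) (n : ℕ) :
    qPoch (q * a) q n * (1 - a) = qPoch a q n * (1 - a * q ^ n) := by
  rw [← qPoch_succ', qPoch_succ]


set_option maxHeartbeats 1000000 in
lemma key_alg {F : Type*} [Field F] (q x a u w e A B C P D : F)
    (hA : A ≠ 0) (hB : B ≠ 0) (hD : D ≠ 0)
    (h1 : 1 - q * a ≠ 0) (h2 : 1 - q * u ≠ 0) (h3 : 1 - a * x ^ 2 * (q * (u * a)) ≠ 0) :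
    (1 + x * a) * (C * (1 - q * (u * a)) / (A * (B * (1 - q * u)))) *
        (P * (1 - x * (q * (u * a))) / (D * (1 - a * x ^ 2 * (q * (u * a))))) * e * w
      = (1 + x * a) * (C / (A * B)) * (P / D) * e * w
        + (-(1 - q * a) * u *
              (P * (1 - a * x ^ 2) / (D * (1 - a * x ^ 2 * (q * (u * a))))) *
              (C / (A * (1 - q * a) * B)) * (e * x) * (w * (a * a * q))
            - -(1 - a) * (q * u) * (P / D) * (C / (A * (B * (1 - q * u)))) * e * w) := by
  set β := 1 - a * x ^ 2 * (q * (u * a)) with hβ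
  set Δ := A * B * D * (1 - q * a) * (1 - q * u) * β with hΔdef
  have hΔ : Δ ≠ 0 := by
    apply mul_ne_zero; apply mul_ne_zero; apply mul_ne_zero; apply mul_ne_zero
    apply mul_ne_zero hA hB
    all_goals assumption
  have t1 : (1 + x * a) * (C * (1 - q * (u * a)) / (A * (B * (1 - q * u)))) *
        (P * (1 - x * (q * (u * a))) / (D * β)) * e * w
      = (1 + x * a) * C * (1 - q * (u * a)) * P * (1 - x * (q * (u * a))) * e * w *
          (1 - q * a) / Δ := by
    rw [eq_div_iff hΔ, hΔdef]
    field_simp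
  have t2 : (1 + x * a) * (C / (A * B)) * (P / D) * e * w
      = (1 + x * a) * C * P * e * w * ((1 - q * a) * (1 - q * u) * β) / Δ := by
    rw [eq_div_iff hΔ, hΔdef]
    field_simp
  have t3 : -(1 - q * a) * u * (P * (1 - a * x ^ 2) / (D * β)) *
        (C / (A * (1 - q * a) * B)) * (e * x) * (w * (a * a * q))
      = -((1 - q * a) * u * P * (1 - a * x ^ 2) * C * e * x * w * a * a * q * (1 - q * u)) / Δ := by
    rw [eq_div_iff hΔ, hΔdef]
    field_simp
  have t4 : -(1 - a) * (q * u) * (P / D) * (C / (A * (B * (1 - q * u)))) * e * w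
      = -((1 - a) * q * u * P * C * e * w * ((1 - q * a) * β)) / Δ := by
    rw [eq_div_iff hΔ, hΔdef]
    field_simp
  rw [t1, t2, t3, t4, div_sub_div_same, ← add_div, div_eq_div_iff hΔ hΔ, hβ]
  ring


lemma bdry_alg {F : Type*} [Field F] (x g w C P D c : F)
    (hC : C ≠ 0) (hc : c ≠ 0) (hD : D ≠ 0) (hb : 1 - g * x ^ 2 * g ≠ 0) :
    (1 + x * g) * (C * c / (C * c * 1)) * (P * (1 - x * g) / (D * (1 - g * x ^ 2 * g))) * w
      = -(-c * 1 * (P / D) * (C / (C * c * 1)) * w) := by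
  set β := 1 - g * x ^ 2 * g with hβ
  set Δ := C * c * D * β with hΔdef
  have hΔ : Δ ≠ 0 := by
    apply mul_ne_zero; apply mul_ne_zero; apply mul_ne_zero
    all_goals assumption
  have t1 : (1 + x * g) * (C * c / (C * c * 1)) * (P * (1 - x * g) / (D * β)) * w
      = (1 + x * g) * P * (1 - x * g) * w * (C * c) / Δ := by
    rw [eq_div_iff hΔ, hΔdef]
    field_simp
  have t2 : -(-c * 1 * (P / D) * (C / (C * c * 1)) * w)
      = P * w * (C * c) * β / Δ := by
    rw [eq_div_iff hΔ, hΔdef]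
    field_simp
  rw [t1, t2, div_eq_div_iff hΔ hΔ, hβ]
  ring

set_option maxHeartbeats 2000000 in
/-- Finite form of the quintuple product identity. -/
theorem finite_quintuple_product {F : Type*} [Field F] (q x : F) (m : ℕ)
    (hx : ∀ j : ℕ, 1 - x ^ 2 * q ^ j ≠ 0) (hq : ∀ j : ℕ, 1 - q ^ (j + 1) ≠ 0) :
    1 = ∑ k ∈ Finset.range (m + 1),
      (1 + x * q ^ k) * qBinom q m k *
        (qPoch x q (m + 1) / qPoch (q ^ k * x ^ 2) q (m + 1)) * x ^ k * q ^ (k ^ 2) := by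
  -- nonvanishing facts
  have hqp : ∀ n : ℕ, qPoch q q n ≠ 0 := by
    intro n
    unfold qPoch
    rw [Finset.prod_ne_zero_iff]
    intro j _
    have := hq j
    rw [pow_succ'] at this
    exact this
  have hxp : ∀ k n : ℕ, qPoch (q ^ k * x ^ 2) q n ≠ 0 := by
    intro k n
    unfold qPoch
    rw [Finset.prod_ne_zero_iff]
    intro j _
    have := hx (k + j)
    rw [pow_add] at this
    intro h; apply this
    rw [← h]; ring
  induction m with
  | zero =>
      rw [Finset.sum_range_one]
      have h0 : (1 : F) - x ^ 2 ≠ 0 := by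
        have := hx 0; rwa [pow_zero, mul_one] at this
      simp only [qBinom, qPoch, Finset.prod_range_one, Finset.prod_range_zero,
        pow_zero, Nat.sub_self, mul_one, one_mul, zero_add]
      field_simp
      ring
  | succ m ih =>
      -- the telescoping certificate
      set G : ℕ → F := fun j =>
        -(1 - q ^ j) * q ^ (m + 1 - j) *
          (qPoch x q (m + 1) / qPoch (q ^ j * x ^ 2) q (m + 1)) *
          (qPoch q q m / (qPoch q q j * qPoch q q (m + 1 - j))) * x ^ j * q ^ (j ^ 2)
        with hG
      have key : ∀ k ∈ Finset.range (m + 1),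
          (1 + x * q ^ k) * qBinom q (m + 1) k *
            (qPoch x q (m + 1 + 1) / qPoch (q ^ k * x ^ 2) q (m + 1 + 1)) * x ^ k * q ^ (k ^ 2)
          = (1 + x * q ^ k) * qBinom q m k *
              (qPoch x q (m + 1) / qPoch (q ^ k * x ^ 2) q (m + 1)) * x ^ k * q ^ (k ^ 2)
            + (G (k + 1) - G k) := by
        intro k hk
        rw [Finset.mem_range, Nat.lt_succ_iff] at hk
        have hu : q ^ (m - k) * q ^ k = q ^ m := by
          rw [← pow_add, Nat.sub_add_cancel hk]
        have hsub1 : m + 1 - k = (m - k) + 1 := by omega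
        have hsub2 : m + 1 - (k + 1) = m - k := by omega
        have hD' : qPoch (q ^ (k + 1) * x ^ 2) q (m + 1) * (1 - q ^ k * x ^ 2)
            = qPoch (q ^ k * x ^ 2) q (m + 1) * (1 - q ^ k * x ^ 2 * q ^ (m + 1)) := by
          have := qPoch_shift (q ^ k * x ^ 2) q (m + 1)
          rw [show q * (q ^ k * x ^ 2) = q ^ (k + 1) * x ^ 2 by rw [pow_succ']; ring] at this
          exact this
        -- abbreviations
        have hA := hqp k
        have hB := hqp (m - k)
        have hD := hxp k (m + 1)
        have hDn := hxp (k + 1) (m + 1)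
        have hqk : (1 : F) - q * q ^ k ≠ 0 := by
          have := hq k; rwa [pow_succ'] at this
        have hqu : (1 : F) - q * q ^ (m - k) ≠ 0 := by
          have := hq (m - k); rwa [pow_succ'] at this
        have hxk : (1 : F) - q ^ k * x ^ 2 ≠ 0 := by
          have := hx k; intro h; apply this; rw [← h]; ring
        simp only [hG, qBinom, hsub1, hsub2]
        rw [qPoch_succ x q (m + 1), qPoch_succ (q ^ k * x ^ 2) q (m + 1),
          qPoch_succ q q m, qPoch_succ q q (m - k), qPoch_succ q q k]
        -- rewrite all exponents in terms of q ^ k, q ^ (m - k), q ^ (k ^ 2), x ^ k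
        have e1 : q ^ (m + 1) = q * (q ^ (m - k) * q ^ k) := by
          rw [hu, pow_succ]; ring
        have e2 : q ^ ((k + 1) ^ 2) = q ^ (k ^ 2) * q ^ k * q ^ k * q := by
          rw [show (k + 1) ^ 2 = k ^ 2 + k + k + 1 by ring, pow_succ, pow_add, pow_add]
        have e3 : x ^ (k + 1) = x ^ k * x := pow_succ x k
        have e4 : q ^ m = q ^ (m - k) * q ^ k := hu.symm
        have e5 : q ^ (k + 1) = q * q ^ k := by rw [pow_succ']
        rw [e1] at hD' ⊢
        have hbig : (1 : F) - q ^ k * x ^ 2 * (q * (q ^ (m - k) * q ^ k)) ≠ 0 := by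
          have := hx (k + (m - k) + k + 1)
          intro h; apply this
          rw [← h, pow_add, pow_add, pow_add, pow_one]; ring
        have hPD' : qPoch x q (m + 1) / qPoch (q ^ (k + 1) * x ^ 2) q (m + 1)
            = qPoch x q (m + 1) * (1 - q ^ k * x ^ 2)
              / (qPoch (q ^ k * x ^ 2) q (m + 1) *
                  (1 - q ^ k * x ^ 2 * (q * (q ^ (m - k) * q ^ k)))) := by
          rw [div_eq_div_iff hDn (mul_ne_zero hD hbig)]
          linear_combination (-(qPoch x q (m + 1))) * hD'
        have e6 : q ^ (m - k + 1) = q * q ^ (m - k) := by rw [pow_succ']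
        rw [hPD', e2, e3, e5, e4, e6]
        linear_combination key_alg q x (q ^ k) (q ^ (m - k)) (q ^ (k ^ 2)) (x ^ k)
          (qPoch q q k) (qPoch q q (m - k)) (qPoch q q m) (qPoch x q (m + 1))
          (qPoch (q ^ k * x ^ 2) q (m + 1)) hA hB hD hqk hqu hbig
      have bdry : (1 + x * q ^ (m + 1)) * qBinom q (m + 1) (m + 1) *
            (qPoch x q (m + 1 + 1) / qPoch (q ^ (m + 1) * x ^ 2) q (m + 1 + 1)) *
            x ^ (m + 1) * q ^ ((m + 1) ^ 2)
          = -G (m + 1) := by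
        have hP0 : qPoch q q 0 = 1 := by simp [qPoch]
        simp only [hG, qBinom, Nat.sub_self, Nat.add_sub_cancel_left, Nat.add_sub_cancel,
          pow_zero, hP0]
        rw [qPoch_succ x q (m + 1), qPoch_succ (q ^ (m + 1) * x ^ 2) q (m + 1),
          qPoch_succ q q m]
        have hA := hqp m
        have hD := hxp (m + 1) (m + 1)
        have hq1 : (1 : F) - q * q ^ m ≠ 0 := by
          have := hq m; rwa [pow_succ'] at this
        have hbig : (1 : F) - q ^ (m + 1) * x ^ 2 * q ^ (m + 1) ≠ 0 := by
          have := hx (m + 1 + (m + 1))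
          intro h; apply this; rw [← h, pow_add]; ring
        have hbig' : (1 : F) - q ^ (m + 1) * x ^ 2 * q ^ (m + 1)
            = 1 - q ^ (m + 1) * x ^ 2 * q ^ (m + 1) := rfl
        linear_combination bdry_alg x (q ^ (m + 1)) (x ^ (m + 1) * q ^ ((m + 1) ^ 2))
          (qPoch q q m) (qPoch x q (m + 1)) (qPoch (q ^ (m + 1) * x ^ 2) q (m + 1))
          (1 - q * q ^ m) hA hq1 hD hbig
      rw [Finset.sum_range_succ, Finset.sum_congr rfl key, Finset.sum_add_distrib,
        Finset.sum_range_sub (f := G), bdry]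
      have hG0 : G 0 = 0 := by simp [hG]
      rw [hG0]
      rw [← ih]
      ring
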